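/- Strong bilateral semantic harmony: for all sets Γ, Δ of formulas, every base B, every formula χ, and each sign * ∈ {+,−}: Γ;Δ ⊩*_B χ if and only if (Δ)^D;(Γ)^D ⊩*ᴰ_{(B)^D} (χ)^D, where (+)^D = − and (−)^D = +. -/

import Mathlib

/-- Signs: `pos` for proof/assertion, `neg` for refutation/rejection. -/
inductive Sign where
  | pos
  | neg
deriving DecidableEq

/-- The dual of a sign. -/
def Sign.dual : Sign → Sign
  | .pos => .neg
  | .neg => .pos

/-- Formulas of the bilateral logic 2Int. -/
inductive Form where
  | atom : ℕ → Form
  | bot : Form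
  | top : Form
  | and : Form → Form → Form
  | or : Form → Form → Form
  | imp : Form → Form → Form
  | coimp : Form → Form → Form
deriving DecidableEq

/-- A premise of an atomic rule: the sign required (proof or refutation), the premise atom,
and the sets of dischargeable atomic proof assumptions and refutation assumptions. -/
structure Premise where
  sign : Sign
  concl : ℕ
  dischargePf : Set ℕ
  dischargeRf : Set ℕ

/-- An atomic rule: a list of premises, a marking as proof (`pos`) or refutation (`neg`) rule,
and an atomic conclusion. -/
structure AtomicRule where
  prems : List Premise
  sign : Sign
  concl : ℕ

/-- A bilateral atomic system (base) is a set of atomic rules. -/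
abbrev Base := Set AtomicRule

/-- `AtDeriv B s Γ Δ p` formalizes `Γ;Δ ⊢^s_B p`: there is a deduction in `B` of the atom `p`
whose open atomic proof assumptions are contained in `Γ` and open atomic refutation
assumptions in `Δ`, consisting of a single assumption of sign `s` or ending with a rule of
sign `s`. -/
inductive AtDeriv (B : Base) : Sign → Set ℕ → Set ℕ → ℕ → Prop
  | hypPos {Γ Δ : Set ℕ} {p : ℕ} : p ∈ Γ → AtDeriv B .pos Γ Δ p
  | hypNeg {Γ Δ : Set ℕ} {p : ℕ} : p ∈ Δ → AtDeriv B .neg Γ Δ p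
  | app {Γ Δ : Set ℕ} {R : AtomicRule} (hR : R ∈ B)
      (h : ∀ pr ∈ R.prems,
        AtDeriv B pr.sign (Γ ∪ pr.dischargePf) (Δ ∪ pr.dischargeRf) pr.concl) :
      AtDeriv B R.sign Γ Δ R.concl

/-- Bilateral validity (support) `⊩^s_B φ`, by recursion on the formula. -/
def Supp : Form → Base → Sign → Prop
  | .atom p, B, s => AtDeriv B s ∅ ∅ p
  | .bot, B, .pos => ∀ p : ℕ, AtDeriv B .pos ∅ ∅ p ∧ AtDeriv B .neg ∅ ∅ p
  | .bot, _, .neg => True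
  | .top, _, .pos => True
  | .top, B, .neg => ∀ p : ℕ, AtDeriv B .pos ∅ ∅ p ∧ AtDeriv B .neg ∅ ∅ p
  | .and φ ψ, B, .pos => Supp φ B .pos ∧ Supp ψ B .pos
  | .and φ ψ, B, .neg => ∀ C : Base, B ⊆ C → ∀ p : ℕ,
      (((∀ D : Base, C ⊆ D → Supp φ D .neg → AtDeriv D .pos ∅ ∅ p) ∧
        (∀ D : Base, C ⊆ D → Supp ψ D .neg → AtDeriv D .pos ∅ ∅ p)) →
        AtDeriv C .pos ∅ ∅ p) ∧
      (((∀ D : Base, C ⊆ D → Supp φ D .neg → AtDeriv D .neg ∅ ∅ p) ∧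
        (∀ D : Base, C ⊆ D → Supp ψ D .neg → AtDeriv D .neg ∅ ∅ p)) →
        AtDeriv C .neg ∅ ∅ p)
  | .or φ ψ, B, .pos => ∀ C : Base, B ⊆ C → ∀ p : ℕ,
      (((∀ D : Base, C ⊆ D → Supp φ D .pos → AtDeriv D .pos ∅ ∅ p) ∧
        (∀ D : Base, C ⊆ D → Supp ψ D .pos → AtDeriv D .pos ∅ ∅ p)) →
        AtDeriv C .pos ∅ ∅ p) ∧
      (((∀ D : Base, C ⊆ D → Supp φ D .pos → AtDeriv D .neg ∅ ∅ p) ∧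
        (∀ D : Base, C ⊆ D → Supp ψ D .pos → AtDeriv D .neg ∅ ∅ p)) →
        AtDeriv C .neg ∅ ∅ p)
  | .or φ ψ, B, .neg => Supp φ B .neg ∧ Supp ψ B .neg
  | .imp φ ψ, B, .pos => ∀ C : Base, B ⊆ C → Supp φ C .pos → Supp ψ C .pos
  | .imp φ ψ, B, .neg => Supp φ B .pos ∧ Supp ψ B .neg
  | .coimp φ ψ, B, .pos => Supp φ B .pos ∧ Supp ψ B .neg
  | .coimp φ ψ, B, .neg => ∀ C : Base, B ⊆ C → Supp ψ C .neg → Supp φ C .neg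

open Classical in
/-- `Cons B Γ Δ s χ` formalizes `Γ;Δ ⊩^s_B χ`. -/
def Cons (B : Base) (Γ Δ : Set Form) (s : Sign) (χ : Form) : Prop :=
  if Γ = ∅ ∧ Δ = ∅ then Supp χ B s
  else ∀ C : Base, B ⊆ C →
    (∀ φ ∈ Γ, Supp φ C .pos) → (∀ ψ ∈ Δ, Supp ψ C .neg) → Supp χ C s

/-- Dual of a premise. -/
def Premise.dual (pr : Premise) : Premise :=
  ⟨pr.sign.dual, pr.concl, pr.dischargeRf, pr.dischargePf⟩

/-- Dual of an atomic rule. -/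
def AtomicRule.dual (R : AtomicRule) : AtomicRule :=
  ⟨R.prems.map Premise.dual, R.sign.dual, R.concl⟩

/-- Dual of a base. -/
def Base.dual (B : Base) : Base := AtomicRule.dual '' B

/-- Dual of a formula. -/
def Form.dual : Form → Form
  | .atom p => .atom p
  | .bot => .top
  | .top => .bot
  | .and φ ψ => (φ.dual).or (ψ.dual)
  | .or φ ψ => (φ.dual).and (ψ.dual)
  | .imp φ ψ => (ψ.dual).coimp (φ.dual)
  | .coimp φ ψ => (ψ.dual).imp (φ.dual)


@[simp] lemma Sign.dual_dual (s : Sign) : s.dual.dual = s := by cases s <;> rfl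
@[simp] lemma Sign.dual_pos : Sign.dual .pos = .neg := rfl
@[simp] lemma Sign.dual_neg : Sign.dual .neg = .pos := rfl

@[simp] lemma Premise.dual_dual (pr : Premise) : pr.dual.dual = pr := by
  cases pr; simp [Premise.dual]

@[simp] lemma AtomicRule.dual_dual (R : AtomicRule) : R.dual.dual = R := by
  cases R; simp [AtomicRule.dual, List.map_map, Function.comp_def]

@[simp] lemma Base.dual_dual (B : Base) : B.dual.dual = B := by
  simp [Base.dual, Set.image_image]

@[simp] lemma Form.dual_dual (φ : Form) : φ.dual.dual = φ := by
  induction φ <;> simp [Form.dual, *]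

@[simp] lemma image_form_dual_dual (S : Set Form) : Form.dual '' (Form.dual '' S) = S := by
  simp [Set.image_image]

lemma Base.dual_mono {B C : Base} (h : B ⊆ C) : B.dual ⊆ C.dual :=
  Set.image_mono h

lemma atDeriv_dual {B : Base} {s : Sign} {Γ Δ : Set ℕ} {p : ℕ} (h : AtDeriv B s Γ Δ p) :
    AtDeriv B.dual s.dual Δ Γ p := by
  induction h with
  | hypPos h => exact AtDeriv.hypNeg h
  | hypNeg h => exact AtDeriv.hypPos h
  | @app Γ Δ R hR h ih =>
    have h1 : R.dual ∈ B.dual := ⟨R, hR, rfl⟩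
    have := AtDeriv.app (B := B.dual) (Γ := Δ) (Δ := Γ) h1 ?_
    · exact this
    · intro pr hpr
      obtain ⟨q, hq, rfl⟩ := List.mem_map.1 hpr
      exact ih q hq

lemma atDeriv_dual_iff {B : Base} {s : Sign} {Γ Δ : Set ℕ} {p : ℕ} :
    AtDeriv B s Γ Δ p ↔ AtDeriv B.dual s.dual Δ Γ p :=
  ⟨atDeriv_dual, fun h => by simpa using atDeriv_dual h⟩

lemma ih_symm {φ : Form} (ih : ∀ (B : Base) (s : Sign), Supp φ B s ↔ Supp φ.dual B.dual s.dual) :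
    ∀ (B : Base) (s : Sign), Supp φ.dual B s → Supp φ B.dual s.dual :=
  fun B s h => (ih B.dual s.dual).mpr (by simpa using h)

lemma g_dual {α β : Form} (hab : ∀ (B : Base) (s : Sign), Supp α B s → Supp β B.dual s.dual)
    {C : Base} {p : ℕ} {s u : Sign}
    (g : ∀ D : Base, C ⊆ D → Supp β D s.dual → AtDeriv D u ∅ ∅ p) :
    ∀ D : Base, C.dual ⊆ D → Supp α D s → AtDeriv D u.dual ∅ ∅ p := by
  intro D hD hα
  have h2 := g D.dual (by simpa using Base.dual_mono hD) (hab D s hα)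
  simpa using atDeriv_dual h2

lemma supp_dual (χ : Form) : ∀ (B : Base) (s : Sign), Supp χ B s ↔ Supp χ.dual B.dual s.dual := by
  induction χ with
  | atom p => exact fun B s => atDeriv_dual_iff
  | bot =>
    intro B s
    cases s
    · constructor
      · intro h p; exact ⟨atDeriv_dual (h p).2, atDeriv_dual (h p).1⟩
      · intro h p; exact ⟨atDeriv_dual_iff.mpr (h p).2, atDeriv_dual_iff.mpr (h p).1⟩
    · simp [Supp, Form.dual]
  | top =>
    intro B s
    cases s
    · simp [Supp, Form.dual]
    · constructor
      · intro h p; exact ⟨atDeriv_dual (h p).2, atDeriv_dual (h p).1⟩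
      · intro h p; exact ⟨atDeriv_dual_iff.mpr (h p).2, atDeriv_dual_iff.mpr (h p).1⟩
  | and φ ψ ihφ ihψ =>
    intro B s
    cases s
    · exact and_congr (ihφ B .pos) (ihψ B .pos)
    · constructor
      · intro h C hC p
        obtain ⟨h1, h2⟩ := h C.dual (by simpa using Base.dual_mono hC) p
        constructor
        · rintro ⟨g1, g2⟩
          have := h2 ⟨g_dual (s := .neg) (u := .pos) (fun B s => (ihφ B s).mp) g1,
                      g_dual (s := .neg) (u := .pos) (fun B s => (ihψ B s).mp) g2⟩
          simpa using atDeriv_dual this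
        · rintro ⟨g1, g2⟩
          have := h1 ⟨g_dual (s := .neg) (u := .neg) (fun B s => (ihφ B s).mp) g1,
                      g_dual (s := .neg) (u := .neg) (fun B s => (ihψ B s).mp) g2⟩
          simpa using atDeriv_dual this
      · intro h C hC p
        obtain ⟨h1, h2⟩ := h C.dual (Base.dual_mono hC) p
        constructor
        · rintro ⟨g1, g2⟩
          have := h2 ⟨g_dual (s := .pos) (u := .pos) (ih_symm ihφ) g1, g_dual (s := .pos) (u := .pos) (ih_symm ihψ) g2⟩
          simpa using atDeriv_dual this
        · rintro ⟨g1, g2⟩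
          have := h1 ⟨g_dual (s := .pos) (u := .neg) (ih_symm ihφ) g1, g_dual (s := .pos) (u := .neg) (ih_symm ihψ) g2⟩
          simpa using atDeriv_dual this
  | or φ ψ ihφ ihψ =>
    intro B s
    cases s
    · constructor
      · intro h C hC p
        obtain ⟨h1, h2⟩ := h C.dual (by simpa using Base.dual_mono hC) p
        constructor
        · rintro ⟨g1, g2⟩
          have := h2 ⟨g_dual (s := .pos) (u := .pos) (fun B s => (ihφ B s).mp) g1,
                      g_dual (s := .pos) (u := .pos) (fun B s => (ihψ B s).mp) g2⟩
          simpa using atDeriv_dual this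
        · rintro ⟨g1, g2⟩
          have := h1 ⟨g_dual (s := .pos) (u := .neg) (fun B s => (ihφ B s).mp) g1,
                      g_dual (s := .pos) (u := .neg) (fun B s => (ihψ B s).mp) g2⟩
          simpa using atDeriv_dual this
      · intro h C hC p
        obtain ⟨h1, h2⟩ := h C.dual (Base.dual_mono hC) p
        constructor
        · rintro ⟨g1, g2⟩
          have := h2 ⟨g_dual (s := .neg) (u := .pos) (ih_symm ihφ) g1, g_dual (s := .neg) (u := .pos) (ih_symm ihψ) g2⟩
          simpa using atDeriv_dual this
        · rintro ⟨g1, g2⟩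
          have := h1 ⟨g_dual (s := .neg) (u := .neg) (ih_symm ihφ) g1, g_dual (s := .neg) (u := .neg) (ih_symm ihψ) g2⟩
          simpa using atDeriv_dual this
    · exact and_congr (ihφ B .neg) (ihψ B .neg)
  | imp φ ψ ihφ ihψ =>
    intro B s
    cases s
    · constructor
      · intro h C hC hφ
        have h1 : Supp φ C.dual .pos := (ihφ C.dual .pos).mpr (by simpa using hφ)
        have h2 := h C.dual (by simpa using Base.dual_mono hC) h1
        have := (ihψ C.dual .pos).mp h2
        simpa using this
      · intro h C hC hφ
        have h1 : Supp φ.dual C.dual .neg := by simpa using (ihφ C .pos).mp hφ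
        have h2 := h C.dual (Base.dual_mono hC) h1
        have := (ihψ C .pos).mpr (by simpa using h2)
        exact this
    · constructor
      · rintro ⟨h1, h2⟩; exact ⟨(ihψ B .neg).mp h2, (ihφ B .pos).mp h1⟩
      · rintro ⟨h1, h2⟩; exact ⟨(ihφ B .pos).mpr h2, (ihψ B .neg).mpr h1⟩
  | coimp φ ψ ihφ ihψ =>
    intro B s
    cases s
    · constructor
      · rintro ⟨h1, h2⟩; exact ⟨(ihψ B .neg).mp h2, (ihφ B .pos).mp h1⟩
      · rintro ⟨h1, h2⟩; exact ⟨(ihφ B .pos).mpr h2, (ihψ B .neg).mpr h1⟩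
    · constructor
      · intro h C hC hψ
        have h1 : Supp ψ C.dual .neg := (ihψ C.dual .neg).mpr (by simpa using hψ)
        have h2 := h C.dual (by simpa using Base.dual_mono hC) h1
        have := (ihφ C.dual .neg).mp h2
        simpa using this
      · intro h C hC hψ
        have h1 : Supp ψ.dual C.dual .pos := by simpa using (ihψ C .neg).mp hψ
        have h2 := h C.dual (Base.dual_mono hC) h1
        have := (ihφ C .neg).mpr (by simpa using h2)
        exact this

lemma cons_dual {B : Base} {Γ Δ : Set Form} {s : Sign} {χ : Form} (h : Cons B Γ Δ s χ) :
    Cons B.dual (Form.dual '' Δ) (Form.dual '' Γ) s.dual χ.dual := by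
  unfold Cons at h ⊢
  by_cases hc : Γ = ∅ ∧ Δ = ∅
  · rw [if_pos hc] at h
    rw [if_pos (by simp [hc.1, hc.2])]
    exact (supp_dual χ B s).mp h
  · rw [if_neg hc] at h
    rw [if_neg (fun hcc => hc ⟨by simpa using hcc.2, by simpa using hcc.1⟩)]
    intro C hC hpos hneg
    have hBC : B ⊆ C.dual := by simpa using Base.dual_mono hC
    have h1 : ∀ φ ∈ Γ, Supp φ C.dual .pos := fun φ hφ =>
      (supp_dual φ C.dual .pos).mpr (by simpa using hneg φ.dual ⟨φ, hφ, rfl⟩)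
    have h2 : ∀ ψ ∈ Δ, Supp ψ C.dual .neg := fun ψ hψ =>
      (supp_dual ψ C.dual .neg).mpr (by simpa using hpos ψ.dual ⟨ψ, hψ, rfl⟩)
    have := (supp_dual χ C.dual s).mp (h C.dual hBC h1 h2)
    simpa using this


theorem strong_bilateral_semantic_harmony (Γ Δ : Set Form) (B : Base) (χ : Form) (s : Sign) :
    Cons B Γ Δ s χ ↔
      Cons (Base.dual B) (Form.dual '' Δ) (Form.dual '' Γ) (Sign.dual s) (Form.dual χ) := by
  constructor
  · exact cons_dual
  · intro h
    have := cons_dual h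
    simpa using this
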